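/- arXiv:2205.01722 — 5 statements merged into one kernel-verified Lean document; each statement's English description precedes it below -/
import Mathlib

section
/- Let x_1 ≥ x_2 ≥ ... ≥ x_n be integers, and let q ≥ 1 be an integer such that some subset S of indices of size 2q has all x_i (for i in S) equal. If we increase x_i by 1 for exactly q indices i in S and decrease x_i by 1 for the remaining q indices in S, then the potential Ψ = n·Σ_i |x_i| + Σ_{i<j} |x_i - x_j| increases by at least 2q². -/
/-- the same move increases Ψ = n·Σ|x_i| + Σ_{i<j}|x_i - x_j| by at least 2q². -/
theorem stmt1 (n q : ℕ) (hq : 1 ≤ q) (x : Fin n → ℤ) (hx : Antitone x)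
    (S : Finset (Fin n)) (hS : S.card = 2 * q)
    (heq : ∀ i ∈ S, ∀ j ∈ S, x i = x j)
    (T : Finset (Fin n)) (hTS : T ⊆ S) (hT : T.card = q)
    (x' : Fin n → ℤ)
    (hx' : ∀ i, x' i = if i ∈ T then x i + 1 else if i ∈ S then x i - 1 else x i) :
    (n : ℤ) * ∑ i, |x i| + (∑ i, ∑ j, if i < j then |x i - x j| else 0) + 2 * q ^ 2
      ≤ (n : ℤ) * ∑ i, |x' i| + (∑ i, ∑ j, if i < j then |x' i - x' j| else 0) := by
  clear hx
  have hS0 : S.Nonempty := by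
    rw [← Finset.card_pos, hS]; omega
  obtain ⟨i₀, hi₀⟩ := hS0
  set c := x i₀ with hc
  have hxc : ∀ i ∈ S, x i = c := fun i hi => heq i hi i₀ hi₀
  have hT' : (S \ T).card = q := by
    rw [Finset.card_sdiff_of_subset hTS, hS, hT]; omega
  have hx'T : ∀ i ∈ T, x' i = c + 1 := by
    intro i hi; rw [hx' i, if_pos hi, hxc i (hTS hi)]
  have hx'S : ∀ i ∈ S \ T, x' i = c - 1 := by
    intro i hi
    rw [Finset.mem_sdiff] at hi
    rw [hx' i, if_neg hi.2, if_pos hi.1, hxc i hi.1]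
  have hx'c : ∀ i ∉ S, x' i = x i := by
    intro i hi
    rw [hx' i, if_neg (fun h => hi (hTS h)), if_neg hi]
  have hqz : (0 : ℤ) ≤ (q : ℤ) := by positivity
  have sconst : ∀ (U : Finset (Fin n)) (k : ℕ), U.card = k → ∀ v : ℤ,
      ∑ _i ∈ U, v = (k : ℤ) * v := by
    intro U k hU v
    rw [Finset.sum_const, hU, nsmul_eq_mul]
  -- key convexity inequality
  have key : ∀ a : ℤ, 2 * |a| ≤ |a + 1| + |a - 1| := by
    intro a
    have h := abs_add_le (a + 1) (a - 1)
    have h2 : a + 1 + (a - 1) = 2 * a := by ring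
    rw [h2] at h
    calc 2 * |a| = |2 * a| := by rw [abs_mul]; norm_num
    _ ≤ _ := h
  have keypt : ∀ b : ℤ, 2 * |c - b| ≤ |c + 1 - b| + |c - 1 - b| := by
    intro b
    have h := key (c - b)
    have e1 : c - b + 1 = c + 1 - b := by ring
    have e2 : c - b - 1 = c - 1 - b := by ring
    rwa [e1, e2] at h
  have hsplitS : ∀ f : Fin n → ℤ, ∑ i ∈ S, f i = ∑ i ∈ S \ T, f i + ∑ i ∈ T, f i :=
    fun f => (Finset.sum_sdiff hTS).symm
  -- Part 1 : sum of |x| increases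
  have part1 : ∑ i, |x i| ≤ ∑ i, |x' i| := by
    rw [← Finset.sum_add_sum_compl S fun i => |x i|,
        ← Finset.sum_add_sum_compl S fun i => |x' i|]
    have e1 : ∑ i ∈ Sᶜ, |x' i| = ∑ i ∈ Sᶜ, |x i| :=
      Finset.sum_congr rfl fun i hi => by rw [hx'c i (Finset.mem_compl.mp hi)]
    rw [e1]
    have e2 : ∑ i ∈ S, |x i| = 2 * (q : ℤ) * |c| := by
      calc ∑ i ∈ S, |x i| = ∑ _i ∈ S, |c| :=
            Finset.sum_congr rfl fun i hi => by rw [hxc i hi]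
      _ = ((2 * q : ℕ) : ℤ) * |c| := sconst S (2 * q) hS _
      _ = 2 * (q : ℤ) * |c| := by push_cast; ring
    have e3 : ∑ i ∈ S, |x' i| = (q : ℤ) * |c - 1| + (q : ℤ) * |c + 1| := by
      have p1 : ∑ i ∈ S \ T, |x' i| = ∑ _i ∈ S \ T, |c - 1| :=
        Finset.sum_congr rfl fun i hi => by rw [hx'S i hi]
      have p2 : ∑ i ∈ T, |x' i| = ∑ _i ∈ T, |c + 1| :=
        Finset.sum_congr rfl fun i hi => by rw [hx'T i hi]
      rw [hsplitS, p1, p2, sconst _ q hT' _, sconst _ q hT _]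
    rw [e2, e3]
    have h := mul_le_mul_of_nonneg_left (key c) hqz
    linarith
  -- double sum over all ordered pairs
  have symm2 : ∀ y : Fin n → ℤ,
      2 * (∑ i, ∑ j, if i < j then |y i - y j| else 0) = ∑ i, ∑ j, |y i - y j| := by
    intro y
    have hpt : ∀ i j : Fin n, |y i - y j| =
        (if i < j then |y i - y j| else 0) + (if j < i then |y i - y j| else 0) := by
      intro i j
      rcases lt_trichotomy i j with h | h | h
      · simp [h, not_lt.mpr h.le]
      · subst h; simp
      · simp [h, not_lt.mpr h.le]
    have e : ∑ i, ∑ j, |y i - y j|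
        = ∑ i, ∑ j, ((if i < j then |y i - y j| else 0) + (if j < i then |y i - y j| else 0)) :=
      Finset.sum_congr rfl fun i _ => Finset.sum_congr rfl fun j _ => hpt i j
    rw [e]
    simp only [Finset.sum_add_distrib]
    have hsw : ∑ i, ∑ j, (if j < i then |y i - y j| else 0)
         = ∑ i, ∑ j, (if i < j then |y i - y j| else 0) := by
      rw [Finset.sum_comm]
      exact Finset.sum_congr rfl fun i _ => Finset.sum_congr rfl fun j _ => by
        rw [abs_sub_comm]
    rw [hsw]; ring
  have swapcross : ∀ y : Fin n → ℤ,
      ∑ i ∈ Sᶜ, ∑ j ∈ S, |y i - y j| = ∑ i ∈ S, ∑ j ∈ Sᶜ, |y i - y j| := by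
    intro y
    rw [Finset.sum_comm]
    exact Finset.sum_congr rfl fun i _ => Finset.sum_congr rfl fun j _ => abs_sub_comm _ _
  have decompF : ∀ y : Fin n → ℤ, ∑ i, ∑ j, |y i - y j|
      = (∑ i ∈ S, ∑ j ∈ S, |y i - y j|) + (∑ i ∈ S, ∑ j ∈ Sᶜ, |y i - y j|)
      + (∑ i ∈ Sᶜ, ∑ j ∈ S, |y i - y j|) + (∑ i ∈ Sᶜ, ∑ j ∈ Sᶜ, |y i - y j|) := by
    intro y
    rw [← Finset.sum_add_sum_compl S (fun i => ∑ j, |y i - y j|)]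
    have h1 : ∀ i : Fin n, ∑ j, |y i - y j| = ∑ j ∈ S, |y i - y j| + ∑ j ∈ Sᶜ, |y i - y j| :=
      fun i => (Finset.sum_add_sum_compl S _).symm
    have g1 : ∑ i ∈ S, ∑ j, |y i - y j|
        = ∑ i ∈ S, (∑ j ∈ S, |y i - y j| + ∑ j ∈ Sᶜ, |y i - y j|) :=
      Finset.sum_congr rfl fun i _ => h1 i
    have g2 : ∑ i ∈ Sᶜ, ∑ j, |y i - y j|
        = ∑ i ∈ Sᶜ, (∑ j ∈ S, |y i - y j| + ∑ j ∈ Sᶜ, |y i - y j|) :=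
      Finset.sum_congr rfl fun i _ => h1 i
    rw [g1, g2, Finset.sum_add_distrib, Finset.sum_add_distrib]
    ring
  -- blocks
  have hSS_x : ∑ i ∈ S, ∑ j ∈ S, |x i - x j| = 0 := by
    apply Finset.sum_eq_zero
    intro i hi
    apply Finset.sum_eq_zero
    intro j hj
    rw [hxc i hi, hxc j hj, sub_self, abs_zero]
  have hSS_x' : ∑ i ∈ S, ∑ j ∈ S, |x' i - x' j| = 4 * (q : ℤ) ^ 2 := by
    have inner1 : ∀ i ∈ S \ T, ∑ j ∈ S, |x' i - x' j| = 2 * (q : ℤ) := by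
      intro i hi
      have p1 : ∑ j ∈ S \ T, |x' i - x' j| = ∑ _j ∈ S \ T, (0 : ℤ) :=
        Finset.sum_congr rfl fun j hj => by
          rw [hx'S i hi, hx'S j hj, sub_self, abs_zero]
      have p2 : ∑ j ∈ T, |x' i - x' j| = ∑ _j ∈ T, (2 : ℤ) :=
        Finset.sum_congr rfl fun j hj => by
          have h2 : x' i - x' j = -2 := by rw [hx'S i hi, hx'T j hj]; ring
          rw [h2]; norm_num
      rw [hsplitS, p1, p2, Finset.sum_const_zero, sconst T q hT 2]
      ring
    have inner2 : ∀ i ∈ T, ∑ j ∈ S, |x' i - x' j| = 2 * (q : ℤ) := by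
      intro i hi
      have p1 : ∑ j ∈ S \ T, |x' i - x' j| = ∑ _j ∈ S \ T, (2 : ℤ) :=
        Finset.sum_congr rfl fun j hj => by
          have h2 : x' i - x' j = 2 := by rw [hx'T i hi, hx'S j hj]; ring
          rw [h2]; norm_num
      have p2 : ∑ j ∈ T, |x' i - x' j| = ∑ _j ∈ T, (0 : ℤ) :=
        Finset.sum_congr rfl fun j hj => by
          rw [hx'T i hi, hx'T j hj, sub_self, abs_zero]
      rw [hsplitS, p1, p2, Finset.sum_const_zero, sconst _ q hT' 2]
      ring
    have q1 : ∑ i ∈ S \ T, ∑ j ∈ S, |x' i - x' j| = ∑ _i ∈ S \ T, 2 * (q : ℤ) :=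
      Finset.sum_congr rfl inner1
    have q2 : ∑ i ∈ T, ∑ j ∈ S, |x' i - x' j| = ∑ _i ∈ T, 2 * (q : ℤ) :=
      Finset.sum_congr rfl inner2
    rw [hsplitS, q1, q2, sconst _ q hT' _, sconst _ q hT _]
    ring
  have cross1 : ∑ i ∈ S, ∑ j ∈ Sᶜ, |x i - x j| ≤ ∑ i ∈ S, ∑ j ∈ Sᶜ, |x' i - x' j| := by
    have hL : ∑ i ∈ S, ∑ j ∈ Sᶜ, |x i - x j| = (q : ℤ) * ∑ j ∈ Sᶜ, 2 * |c - x j| := by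
      calc ∑ i ∈ S, ∑ j ∈ Sᶜ, |x i - x j| = ∑ _i ∈ S, ∑ j ∈ Sᶜ, |c - x j| :=
            Finset.sum_congr rfl fun i hi => Finset.sum_congr rfl fun j _ => by
              rw [hxc i hi]
      _ = ((2 * q : ℕ) : ℤ) * ∑ j ∈ Sᶜ, |c - x j| := sconst S (2 * q) hS _
      _ = (q : ℤ) * ∑ j ∈ Sᶜ, 2 * |c - x j| := by
            push_cast
            rw [Finset.mul_sum, Finset.mul_sum]
            exact Finset.sum_congr rfl fun j _ => by ring
    have hR : ∑ i ∈ S, ∑ j ∈ Sᶜ, |x' i - x' j|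
        = (q : ℤ) * ∑ j ∈ Sᶜ, (|c + 1 - x j| + |c - 1 - x j|) := by
      have r1 : ∑ i ∈ S \ T, ∑ j ∈ Sᶜ, |x' i - x' j|
          = ∑ _i ∈ S \ T, ∑ j ∈ Sᶜ, |c - 1 - x j| :=
        Finset.sum_congr rfl fun i hi => Finset.sum_congr rfl fun j hj => by
          rw [hx'S i hi, hx'c j (Finset.mem_compl.mp hj)]
      have r2 : ∑ i ∈ T, ∑ j ∈ Sᶜ, |x' i - x' j|
          = ∑ _i ∈ T, ∑ j ∈ Sᶜ, |c + 1 - x j| :=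
        Finset.sum_congr rfl fun i hi => Finset.sum_congr rfl fun j hj => by
          rw [hx'T i hi, hx'c j (Finset.mem_compl.mp hj)]
      rw [hsplitS, r1, r2, sconst _ q hT' _, sconst _ q hT _, Finset.sum_add_distrib]
      ring
    rw [hL, hR]
    exact mul_le_mul_of_nonneg_left
      (Finset.sum_le_sum fun j _ => keypt (x j)) hqz
  have cross2 : ∑ i ∈ Sᶜ, ∑ j ∈ S, |x i - x j| ≤ ∑ i ∈ Sᶜ, ∑ j ∈ S, |x' i - x' j| := by
    rw [swapcross, swapcross]; exact cross1
  have hDD : ∑ i ∈ Sᶜ, ∑ j ∈ Sᶜ, |x' i - x' j| = ∑ i ∈ Sᶜ, ∑ j ∈ Sᶜ, |x i - x j| :=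
    Finset.sum_congr rfl fun i hi => Finset.sum_congr rfl fun j hj => by
      rw [hx'c i (Finset.mem_compl.mp hi), hx'c j (Finset.mem_compl.mp hj)]
  -- combine
  have hF : (∑ i, ∑ j, |x i - x j|) + 4 * (q : ℤ) ^ 2 ≤ ∑ i, ∑ j, |x' i - x' j| := by
    rw [decompF x, decompF x', hSS_x, hSS_x', hDD]
    linarith
  have hP : (∑ i, ∑ j, if i < j then |x i - x j| else 0) + 2 * (q : ℤ) ^ 2
      ≤ ∑ i, ∑ j, if i < j then |x' i - x' j| else 0 := by
    have h1 := symm2 x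
    have h2 := symm2 x'
    linarith
  have hn : (0 : ℤ) ≤ (n : ℤ) := by positivity
  have := mul_le_mul_of_nonneg_left part1 hn
  linarith
end

section
/- Let x_1 ≥ x_2 ≥ ... ≥ x_n ≥ 0 be integers such that some subset S of indices of size q has x_i = 0 for all i in S. If we increase x_i by 1 for all i in S, then the potential Ψ = n·Σ_i |x_i| + Σ_{i<j} |x_i - x_j| increases by at least q². -/
lemma dbl_aux {n : ℕ} (f : Fin n → Fin n → ℤ) (hsym : ∀ i j, f i j = f j i)
    (hdiag : ∀ i, f i i = 0) :
    ∑ i, ∑ j, f i j = 2 * ∑ i, ∑ j, (if i < j then f i j else 0) := by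
  have h1 : ∀ i j : Fin n, f i j =
      (if i < j then f i j else 0) + (if j < i then f i j else 0) := by
    intro i j
    rcases lt_trichotomy i j with h | h | h
    · simp [h, not_lt.2 h.le]
    · subst h; simp [hdiag]
    · simp [h, not_lt.2 h.le]
  have h2 : (∑ i, ∑ j, if j < i then f i j else 0)
      = ∑ i, ∑ j, if i < j then f i j else 0 := by
    rw [Finset.sum_comm]
    refine Finset.sum_congr rfl fun a _ => Finset.sum_congr rfl fun b _ => ?_
    rw [hsym]
  calc ∑ i, ∑ j, f i j
      = ∑ i, ∑ j, ((if i < j then f i j else 0) + (if j < i then f i j else 0)) := by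
        simp_rw [← h1]
    _ = (∑ i, ∑ j, if i < j then f i j else 0)
        + (∑ i, ∑ j, if j < i then f i j else 0) := by
        simp [Finset.sum_add_distrib]
    _ = 2 * ∑ i, ∑ j, (if i < j then f i j else 0) := by rw [h2]; ring

/-- raising q zero-cups to 1 increases Ψ by at least q². -/
theorem stmt2 (n q : ℕ) (x : Fin n → ℤ) (hx : Antitone x) (hnn : ∀ i, 0 ≤ x i)
    (S : Finset (Fin n)) (hS : S.card = q) (hzero : ∀ i ∈ S, x i = 0)
    (x' : Fin n → ℤ) (hx' : ∀ i, x' i = if i ∈ S then x i + 1 else x i) :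
    (n : ℤ) * ∑ i, |x i| + (∑ i, ∑ j, if i < j then |x i - x j| else 0) + q ^ 2
      ≤ (n : ℤ) * ∑ i, |x' i| + (∑ i, ∑ j, if i < j then |x' i - x' j| else 0) := by
  have hqn : q ≤ n := by
    rw [← hS]
    simpa using Finset.card_le_univ S
  -- sum of absolute values
  have key1 : ∑ i, |x' i| = (∑ i, |x i|) + q := by
    have : ∀ i, |x' i| = |x i| + (if i ∈ S then (1:ℤ) else 0) := by
      intro i
      by_cases hi : i ∈ S
      · simp [hx', hi, hzero i hi]
      · simp [hx', hi]
    simp_rw [this, Finset.sum_add_distrib]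
    congr 1
    rw [Finset.sum_ite_mem]
    simp [hS]
  -- pairwise bound
  set c : Fin n → Fin n → ℤ := fun i j => if (i ∈ S ↔ j ∈ S) then 0 else 1 with hc
  have hpair : ∀ i j, |x i - x j| ≤ |x' i - x' j| + c i j := by
    intro i j
    by_cases hi : i ∈ S <;> by_cases hj : j ∈ S <;>
      simp [hc, hx', hi, hj]
    · have h1 := hnn j
      rcases abs_cases (x i + 1 - x j) with ⟨h, _⟩ | ⟨h, _⟩ <;>
        rcases abs_cases (x i - x j) with ⟨h', _⟩ | ⟨h', _⟩ <;>
        linarith [hzero i hi]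
    · have h1 := hnn i
      rcases abs_cases (x i - (x j + 1)) with ⟨h, _⟩ | ⟨h, _⟩ <;>
        rcases abs_cases (x i - x j) with ⟨h', _⟩ | ⟨h', _⟩ <;>
        linarith [hzero j hj]
  -- sum of c
  have hcsum : ∑ i, ∑ j, c i j = 2 * q * ((n:ℤ) - q) := by
    have hrow : ∀ i : Fin n, ∑ j, c i j = if i ∈ S then (n:ℤ) - q else q := by
      intro i
      by_cases hi : i ∈ S
      · simp only [hc, hi, true_iff, hi, if_pos]
        have : ∑ j : Fin n, (if j ∈ S then (0:ℤ) else 1)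
            = ∑ j : Fin n, ((1:ℤ) - if j ∈ S then 1 else 0) := by
          refine Finset.sum_congr rfl fun j _ => ?_
          by_cases hj : j ∈ S <;> simp [hj]
        rw [this, Finset.sum_sub_distrib]
        rw [Finset.sum_ite_mem]
        simp [hS]
      · simp only [hc, hi, false_iff, if_neg hi]
        have : ∀ j : Fin n, (if ¬ j ∈ S then (0:ℤ) else 1) = (if j ∈ S then 1 else 0) := by
          intro j; by_cases hj : j ∈ S <;> simp [hj]
        simp_rw [this]
        rw [Finset.sum_ite_mem]
        simp [hS]
    simp_rw [hrow]
    rw [Finset.sum_ite, Finset.sum_const, Finset.sum_const]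
    have h1 : (Finset.univ.filter (· ∈ S)).card = q := by
      rw [Finset.filter_mem_eq_inter, Finset.univ_inter, hS]
    have h2 : (Finset.univ.filter (· ∉ S)).card = n - q := by
      have : (Finset.univ.filter (· ∉ S)) = Finset.univ \ S := by
        ext a; simp
      rw [this, Finset.card_sdiff_of_subset (Finset.subset_univ S)]
      simp [hS]
    rw [h1, h2]
    rw [nsmul_eq_mul, nsmul_eq_mul, Nat.cast_sub hqn]
    ring
  -- combine
  have hsum : ∑ i, ∑ j, |x i - x j| ≤ (∑ i, ∑ j, |x' i - x' j|) + 2 * q * ((n:ℤ) - q) := by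
    rw [← hcsum, ← Finset.sum_add_distrib]
    refine Finset.sum_le_sum fun i _ => ?_
    rw [← Finset.sum_add_distrib]
    exact Finset.sum_le_sum fun j _ => hpair i j
  have hA : ∑ i, ∑ j, |x i - x j| = 2 * ∑ i, ∑ j, (if i < j then |x i - x j| else 0) :=
    dbl_aux _ (fun i j => abs_sub_comm _ _) (fun i => by simp)
  have hA' : ∑ i, ∑ j, |x' i - x' j| = 2 * ∑ i, ∑ j, (if i < j then |x' i - x' j| else 0) :=
    dbl_aux _ (fun i j => abs_sub_comm _ _) (fun i => by simp)
  have hq2 : 2 * (q:ℤ) * ((n:ℤ) - q) = 2 * q * n - 2 * q ^ 2 := by ring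
  have hmul : (n:ℤ) * (∑ i, |x' i|) = (n:ℤ) * (∑ i, |x i|) + n * q := by
    rw [key1]; ring
  linarith
end

section
/- In the stone-variant cup game, if at any time there exists a cup of fill k for some integer k ≥ 3, then there must exist a cup of fill either k-1 or k-2. -/
/-- One round of the stone-variant cup game: some 2q cups of equal fill `k` are split,
q going up to k+1 and q going down to k-1; all other cups are unchanged. -/
def StoneStep {n : ℕ} (x y : Fin n → ℤ) : Prop :=
  ∃ (k : ℤ) (A B : Finset (Fin n)), Disjoint A B ∧ A.card = B.card ∧ 1 ≤ A.card ∧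
    (∀ i ∈ A ∪ B, x i = k) ∧ (∀ i ∈ A, y i = x i + 1) ∧ (∀ i ∈ B, y i = x i - 1) ∧
    (∀ i, i ∉ A ∪ B → y i = x i)

/-- Invariant: for every level k ≥ 1, a cup at k implies a cup at k-1 or k-2. -/
def StoneInv {n : ℕ} (x : Fin n → ℤ) : Prop :=
  ∀ k : ℤ, 1 ≤ k → (∃ i, x i = k) → ∃ j, x j = k - 1 ∨ x j = k - 2

lemma stoneInv_step {n : ℕ} {x y : Fin n → ℤ} (hx : StoneInv x) (h : StoneStep x y) :
    StoneInv y := by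
  obtain ⟨m, A, B, hAB, hcard, hA1, hval, hAup, hBdown, hout⟩ := h
  obtain ⟨a, ha⟩ := Finset.card_pos.mp hA1
  obtain ⟨b, hb⟩ := Finset.card_pos.mp (hcard ▸ hA1)
  have hya : y a = m + 1 := by rw [hAup a ha, hval a (Finset.mem_union_left _ ha)]
  have hyb : y b = m - 1 := by rw [hBdown b hb, hval b (Finset.mem_union_right _ hb)]
  rintro k hk ⟨i, hi⟩
  by_cases hiAB : i ∈ A ∪ B
  · have hxi : x i = m := hval i hiAB
    rcases Finset.mem_union.mp hiAB with hiA | hiB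
    · have hkm : k = m + 1 := by rw [← hi, hAup i hiA, hxi]
      exact ⟨b, Or.inr (by rw [hyb]; omega)⟩
    · have hm : m = k + 1 := by have := hBdown i hiB; rw [hxi] at this; omega
      have h1 : ∃ i, x i = k + 1 := ⟨a, by rw [hval a (Finset.mem_union_left _ ha), hm]⟩
      obtain ⟨w, hw | hw⟩ := hx (k + 1) (by omega) h1
      · obtain ⟨v, hv⟩ := hx k hk ⟨w, by omega⟩
        have hvout : v ∉ A ∪ B := fun hc => by have := hval v hc; omega
        exact ⟨v, by rw [hout v hvout]; omega⟩
      · have hwout : w ∉ A ∪ B := fun hc => by have := hval w hc; omega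
        exact ⟨w, Or.inl (by rw [hout w hwout]; omega)⟩
  · have hxi : x i = k := by rw [← hout i hiAB, hi]
    obtain ⟨w, hw⟩ := hx k hk ⟨i, hxi⟩
    by_cases hwAB : w ∈ A ∪ B
    · have hxw : x w = m := hval w hwAB
      rcases hw with hw | hw
      · exact ⟨b, Or.inr (by rw [hyb]; omega)⟩
      · exact ⟨a, Or.inl (by rw [hya]; omega)⟩
    · exact ⟨w, by rw [hout w hwAB]; omega⟩

lemma stoneInv_reach {n : ℕ} {x : Fin n → ℤ}
    (hreach : Relation.ReflTransGen StoneStep (fun _ => (0 : ℤ)) x) : StoneInv x := by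
  induction hreach with
  | refl => rintro k hk ⟨i, hi⟩; simp at hi; omega
  | tail _ hstep ih => exact stoneInv_step ih hstep

/-- in any state of the stone game reachable from the all-zero state,
if some cup has fill k ≥ 3, then some cup has fill k-1 or k-2. -/
theorem stmt7 (n : ℕ) (x : Fin n → ℤ)
    (hreach : Relation.ReflTransGen StoneStep (fun _ => (0 : ℤ)) x)
    (k : ℤ) (hk : 3 ≤ k) (hex : ∃ i, x i = k) :
    ∃ j, x j = k - 1 ∨ x j = k - 2 := by
  exact stoneInv_reach hreach k (by omega) hex
end

section
/- Suppose that x_1,...,x_n and y_1,...,y_n are sorted (non-increasing) integer sequences with x_i ≥ y_i for all i, and suppose one round of the stone-variant cup game transforms {y_i} into a sequence {y_i'}. Then there exists a (possibly trivial) round of the stone-variant cup game transforming {x_i} into a sequence {x_i'} such that, after sorting, x_i' ≥ y_i' for all i. -/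
/-- The number of entries of `u` that are at least `c`. -/
def cntGE {n : ℕ} (u : Fin n → ℤ) (c : ℤ) : ℕ :=
  (Finset.univ.filter fun i => c ≤ u i).card

lemma cntGE_comp_perm {n : ℕ} (u : Fin n → ℤ) (σ : Equiv.Perm (Fin n)) (c : ℤ) :
    cntGE (u ∘ σ) c = cntGE u c := by
  unfold cntGE
  apply Finset.card_bij (fun i _ => σ i)
  · intro a ha
    simp only [Finset.mem_filter, Finset.mem_univ, true_and, Function.comp] at *
    exact ha
  · intro a _ b _ h
    exact σ.injective h
  · intro b hb
    refine ⟨σ.symm b, ?_, by simp⟩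
    simp only [Finset.mem_filter, Finset.mem_univ, true_and, Function.comp] at *
    simpa using hb

lemma cntGE_mono {n : ℕ} (u v : Fin n → ℤ) (h : ∀ i, v i ≤ u i) (c : ℤ) :
    cntGE v c ≤ cntGE u c := by
  apply Finset.card_le_card
  intro i hi
  simp only [Finset.mem_filter, Finset.mem_univ, true_and] at *
  exact le_trans hi (h i)

/-- Sorted domination follows from count domination. -/
lemma dominate_of_cntGE {n : ℕ} (u v : Fin n → ℤ) (hu : Antitone u) (hv : Antitone v)
    (h : ∀ c, cntGE v c ≤ cntGE u c) : ∀ i, v i ≤ u i := by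
  intro i
  by_contra hlt
  push_neg at hlt
  have h1 : (i : ℕ) + 1 ≤ cntGE v (v i) := by
    rw [← Fin.card_Iic i]
    apply Finset.card_le_card
    intro j hj
    simp only [Finset.mem_Iic] at hj
    simp only [Finset.mem_filter, Finset.mem_univ, true_and]
    exact hv hj
  have h2 : cntGE u (v i) ≤ (i : ℕ) := by
    rw [← Fin.card_Iio i]
    apply Finset.card_le_card
    intro j hj
    simp only [Finset.mem_filter, Finset.mem_univ, true_and] at hj
    simp only [Finset.mem_Iio]
    by_contra hij
    push_neg at hij
    exact absurd (le_trans hj (hu hij)) (not_le.mpr hlt)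
  have := h (v i)
  omega

section StepCounts
set_option linter.unusedSectionVars false

variable {n : ℕ} (u u' : Fin n → ℤ) (k : ℤ) (A B : Finset (Fin n))
  (hd : Disjoint A B)
  (hk : ∀ i ∈ A ∪ B, u i = k) (hA : ∀ i ∈ A, u' i = u i + 1)
  (hB : ∀ i ∈ B, u' i = u i - 1) (hout : ∀ i, i ∉ A ∪ B → u' i = u i)

include hd hk hA hB hout

lemma cnt_step_up : cntGE u' (k + 1) = cntGE u (k + 1) + A.card := by
  unfold cntGE
  have hset : (Finset.univ.filter fun i => k + 1 ≤ u' i)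
      = (Finset.univ.filter fun i => k + 1 ≤ u i) ∪ A := by
    ext i
    simp only [Finset.mem_filter, Finset.mem_univ, true_and, Finset.mem_union]
    constructor
    · intro h
      by_cases hiA : i ∈ A
      · exact Or.inr hiA
      by_cases hiB : i ∈ B
      · have h1 := hB i hiB
        have h2 := hk i (Finset.mem_union_right _ hiB)
        omega
      · have := hout i (by simp [hiA, hiB])
        exact Or.inl (by omega)
    · rintro (h | hiA)
      · have hiA : i ∉ A := fun hiA => by have := hk i (Finset.mem_union_left _ hiA); omega
        have hiB : i ∉ B := fun hiB => by have := hk i (Finset.mem_union_right _ hiB); omega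
        have := hout i (by simp [hiA, hiB])
        omega
      · have h1 := hA i hiA
        have h2 := hk i (Finset.mem_union_left _ hiA)
        omega
  rw [hset, Finset.card_union_of_disjoint]
  rw [Finset.disjoint_left]
  intro i hi hiA
  simp only [Finset.mem_filter, Finset.mem_univ, true_and] at hi
  have := hk i (Finset.mem_union_left _ hiA)
  omega

lemma cnt_step_down : cntGE u k = cntGE u' k + B.card := by
  unfold cntGE
  have hset : (Finset.univ.filter fun i => k ≤ u i)
      = (Finset.univ.filter fun i => k ≤ u' i) ∪ B := by
    ext i
    simp only [Finset.mem_filter, Finset.mem_univ, true_and, Finset.mem_union]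
    constructor
    · intro h
      by_cases hiB : i ∈ B
      · exact Or.inr hiB
      by_cases hiA : i ∈ A
      · have h1 := hA i hiA
        exact Or.inl (by omega)
      · have := hout i (by simp [hiA, hiB])
        exact Or.inl (by omega)
    · rintro (h | hiB)
      · by_cases hiA : i ∈ A
        · have := hk i (Finset.mem_union_left _ hiA); omega
        by_cases hiB : i ∈ B
        · have h1 := hB i hiB
          have h2 := hk i (Finset.mem_union_right _ hiB)
          omega
        · have := hout i (by simp [hiA, hiB]); omega
      · have := hk i (Finset.mem_union_right _ hiB)
        omega
  rw [hset, Finset.card_union_of_disjoint]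
  rw [Finset.disjoint_left]
  intro i hi hiB
  simp only [Finset.mem_filter, Finset.mem_univ, true_and] at hi
  have h1 := hB i hiB
  have h2 := hk i (Finset.mem_union_right _ hiB)
  omega

lemma cnt_step_other (c : ℤ) (h1 : c ≠ k) (h2 : c ≠ k + 1) : cntGE u' c = cntGE u c := by
  unfold cntGE
  congr 1
  ext i
  simp only [Finset.mem_filter, Finset.mem_univ, true_and]
  by_cases hiA : i ∈ A
  · have := hA i hiA
    have := hk i (Finset.mem_union_left _ hiA)
    omega
  by_cases hiB : i ∈ B
  · have := hB i hiB
    have := hk i (Finset.mem_union_right _ hiB)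
    omega
  · have := hout i (by simp [hiA, hiB])
    omega

end StepCounts

lemma cnt_eq_level {n : ℕ} (u : Fin n → ℤ) (k : ℤ) :
    (Finset.univ.filter fun i => u i = k).card + cntGE u (k + 1) = cntGE u k := by
  unfold cntGE
  rw [← Finset.card_union_of_disjoint]
  · congr 1
    ext i
    simp only [Finset.mem_filter, Finset.mem_univ, true_and, Finset.mem_union]
    omega
  · rw [Finset.disjoint_left]
    intro i hi hi'
    simp only [Finset.mem_filter, Finset.mem_univ, true_and] at *
    omega

/-- domination is preserved under a round of the stone game: if sorted `x`
dominates sorted `y` and one stone-game round turns `y` into `y'`, then some (possibly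
trivial) stone-game round turns `x` into `x'` with sorted `x'` dominating sorted `y'`. -/
theorem stmt9 (n : ℕ) (x y : Fin n → ℤ) (hx : Antitone x) (hy : Antitone y)
    (hdom : ∀ i, y i ≤ x i) (y' : Fin n → ℤ) (hstep : StoneStep y y') :
    ∃ x' : Fin n → ℤ, (x' = x ∨ StoneStep x x') ∧
      ∀ (σ τ : Equiv.Perm (Fin n)), Antitone (x' ∘ σ) → Antitone (y' ∘ τ) →
        ∀ i, y' (τ i) ≤ x' (σ i) := by
  obtain ⟨k, A, B, hd, hcard, hq1, hk, hA, hB, hout⟩ := hstep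
  set q := A.card with hq
  -- counting facts for the step on y
  have F1 : cntGE y' (k + 1) = cntGE y (k + 1) + q := cnt_step_up y y' k A B hd hk hA hB hout
  have F2 : cntGE y k = cntGE y' k + q := by
    rw [cnt_step_down y y' k A B hd hk hA hB hout, hcard]
  have F3 : ∀ c, c ≠ k → c ≠ k + 1 → cntGE y' c = cntGE y c :=
    fun c => cnt_step_other y y' k A B hd hk hA hB hout c
  have F4 : ∀ c, cntGE y c ≤ cntGE x c := cntGE_mono x y hdom
  -- y has at least 2q entries equal to k
  have F5 : cntGE y (k + 1) + 2 * q ≤ cntGE y k := by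
    rw [← cnt_eq_level y k]
    have hsub : A ∪ B ⊆ Finset.univ.filter fun i => y i = k := by
      intro i hi
      simp only [Finset.mem_filter, Finset.mem_univ, true_and]
      exact hk i hi
    have := Finset.card_le_card hsub
    rw [Finset.card_union_of_disjoint hd, ← hcard] at this
    omega
  by_cases hcase : cntGE y (k + 1) + q ≤ cntGE x (k + 1)
  · -- trivial round suffices
    refine ⟨x, Or.inl rfl, ?_⟩
    intro σ τ hσ hτ
    apply dominate_of_cntGE _ _ hσ hτ
    intro c
    rw [cntGE_comp_perm, cntGE_comp_perm]
    by_cases h1 : c = k + 1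
    · subst h1; omega
    by_cases h2 : c = k
    · subst h2
      have := F4 c
      omega
    · rw [F3 c h2 h1]
      exact F4 c
  · -- we need to move p stones on x
    push_neg at hcase
    set p : ℕ := cntGE y (k + 1) + q - cntGE x (k + 1) with hp
    have hp1 : 1 ≤ p := by omega
    have hpq : p ≤ q := by
      have := F4 (k + 1)
      omega
    -- x has many entries equal to k
    have hxk : (Finset.univ.filter fun i => x i = k).card + cntGE x (k + 1) = cntGE x k :=
      cnt_eq_level x k
    have hbig : 2 * p ≤ (Finset.univ.filter fun i => x i = k).card := by
      have h1 := F4 k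
      omega
    obtain ⟨A', hA'sub, hA'card⟩ :=
      Finset.exists_subset_card_eq (s := Finset.univ.filter fun i => x i = k) (n := p)
        (by omega)
    obtain ⟨B', hB'sub, hB'card⟩ :=
      Finset.exists_subset_card_eq
        (s := (Finset.univ.filter fun i => x i = k) \ A') (n := p)
        (by rw [Finset.card_sdiff_of_subset hA'sub]; omega)
    have hB'sub' : B' ⊆ Finset.univ.filter fun i => x i = k :=
      hB'sub.trans (Finset.sdiff_subset)
    have hd' : Disjoint A' B' := by
      rw [Finset.disjoint_right]
      intro i hi
      exact (Finset.mem_sdiff.mp (hB'sub hi)).2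
    have hxA' : ∀ i ∈ A', x i = k := fun i hi => by
      have := hA'sub hi
      simpa using this
    have hxB' : ∀ i ∈ B', x i = k := fun i hi => by
      have := hB'sub' hi
      simpa using this
    set x' : Fin n → ℤ := fun i => if i ∈ A' then x i + 1 else if i ∈ B' then x i - 1 else x i
      with hx'
    have hA'x : ∀ i ∈ A', x' i = x i + 1 := by
      intro i hi; simp only [hx', if_pos hi]
    have hB'x : ∀ i ∈ B', x' i = x i - 1 := by
      intro i hi
      have hiA : i ∉ A' := Finset.disjoint_right.mp hd' hi
      simp only [hx', if_neg hiA, if_pos hi]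
    have houtx : ∀ i, i ∉ A' ∪ B' → x' i = x i := by
      intro i hi
      simp only [Finset.mem_union, not_or] at hi
      simp only [hx', if_neg hi.1, if_neg hi.2]
    have hkx : ∀ i ∈ A' ∪ B', x i = k := by
      intro i hi
      rcases Finset.mem_union.mp hi with h | h
      · exact hxA' i h
      · exact hxB' i h
    have hstepx : StoneStep x x' :=
      ⟨k, A', B', hd', by rw [hA'card, hB'card], by rw [hA'card]; exact hp1,
        hkx, hA'x, hB'x, houtx⟩
    -- counting facts for the step on x
    have G1 : cntGE x' (k + 1) = cntGE x (k + 1) + p := by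
      rw [cnt_step_up x x' k A' B' hd' hkx hA'x hB'x houtx, hA'card]
    have G2 : cntGE x k = cntGE x' k + p := by
      rw [cnt_step_down x x' k A' B' hd' hkx hA'x hB'x houtx, hB'card]
    have G3 : ∀ c, c ≠ k → c ≠ k + 1 → cntGE x' c = cntGE x c :=
      fun c => cnt_step_other x x' k A' B' hd' hkx hA'x hB'x houtx c
    refine ⟨x', Or.inr hstepx, ?_⟩
    intro σ τ hσ hτ
    apply dominate_of_cntGE _ _ hσ hτ
    intro c
    rw [cntGE_comp_perm, cntGE_comp_perm]
    by_cases h1 : c = k + 1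
    · subst h1; omega
    by_cases h2 : c = k
    · subst h2
      have := F4 c
      omega
    · rw [F3 c h2 h1, G3 c h2 h1]
      exact F4 c
end

section
/- Let p ∈ ℕ and q_1,...,q_n ∈ [0,1] with Σ_j q_j = p. Then there exists a probability distribution over p-element subsets of {1,...,n} such that for each j, the probability that j belongs to the chosen subset is exactly q_j. -/
open Finset

private lemma key : ∀ (k n p : ℕ) (q : Fin n → ℝ),
    (univ.filter (fun j => q j ≠ 0 ∧ q j ≠ 1)).card ≤ k →
    (∀ j, 0 ≤ q j) → (∀ j, q j ≤ 1) → (∑ j, q j = p) →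
    ∃ μ : Finset (Fin n) → ℝ,
      (∀ S, 0 ≤ μ S) ∧
      (∑ S : Finset (Fin n), μ S = 1) ∧
      (∀ S, μ S ≠ 0 → S.card = p) ∧
      ∀ j, (∑ S : Finset (Fin n), if j ∈ S then μ S else 0) = q j := by
  intro k
  induction k with
  | zero =>
    intro n p q hc h0 h1 hsum
    have hall : ∀ l, q l = 0 ∨ q l = 1 := by
      intro l; by_contra h; push_neg at h
      have hmem : l ∈ univ.filter (fun j => q j ≠ 0 ∧ q j ≠ 1) := by
        simp [Finset.mem_filter, h.1, h.2]
      have := Finset.card_pos.mpr ⟨l, hmem⟩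
      omega
    set S := univ.filter (fun l => q l = 1) with hS
    have hval : ∀ l, q l = if l ∈ S then 1 else 0 := by
      intro l; rcases hall l with h | h <;> simp [hS, Finset.mem_filter, h]
    have hcards : S.card = p := by
      have : ((S.card : ℝ)) = (p : ℝ) := by
        rw [← hsum, Finset.sum_congr rfl (fun l _ => hval l)]
        simp
      exact_mod_cast this
    refine ⟨fun T => if T = S then 1 else 0, ?_, ?_, ?_, ?_⟩
    · intro T; dsimp; split <;> norm_num
    · simp
    · intro T hT; dsimp at hT
      split at hT
      · subst ‹T = S›; exact hcards
      · simp at hT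
    · intro l
      have hswap : ∀ T : Finset (Fin n),
          (if l ∈ T then (if T = S then (1:ℝ) else 0) else 0)
          = if T = S then (if l ∈ S then (1:ℝ) else 0) else 0 := by
        intro T
        by_cases hT : T = S
        · subst hT; simp
        · simp [hT]
      rw [Finset.sum_congr rfl (fun T _ => hswap T)]
      simp [← hval l]
  | succ k ih =>
    intro n p q hc h0 h1 hsum
    by_cases hk : (univ.filter (fun j => q j ≠ 0 ∧ q j ≠ 1)).card ≤ k
    · exact ih n p q hk h0 h1 hsum
    push_neg at hk
    obtain ⟨i, hi⟩ : ∃ i, i ∈ univ.filter (fun j => q j ≠ 0 ∧ q j ≠ 1) :=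
      Finset.card_pos.mp (by omega)
    rw [Finset.mem_filter] at hi
    have hi0 : 0 < q i := lt_of_le_of_ne (h0 i) (Ne.symm hi.2.1)
    have hi1 : q i < 1 := lt_of_le_of_ne (h1 i) hi.2.2
    have hex : ∃ j, j ≠ i ∧ q j ≠ 0 ∧ q j ≠ 1 := by
      by_contra h
      push_neg at h
      have hall : ∀ l, l ≠ i → q l = 0 ∨ q l = 1 := by
        intro l hl
        by_cases h0' : q l = 0
        · exact Or.inl h0'
        · exact Or.inr (h l hl h0')
      set T := (univ.erase i).filter (fun l => q l = 1) with hT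
      have e1 : ∑ l ∈ univ.erase i, q l = (T.card : ℝ) := by
        rw [hT, ← Finset.sum_boole]
        apply Finset.sum_congr rfl
        intro l hl
        rcases hall l (Finset.mem_erase.mp hl).1 with h' | h' <;> simp [h']
      have e2 : q i + ∑ l ∈ univ.erase i, q l = p := by
        rw [Finset.add_sum_erase _ _ (Finset.mem_univ i)]; exact hsum
      have hlt : (T.card : ℝ) < p := by linarith
      have hgt : (p : ℝ) < T.card + 1 := by linarith
      have h1' : T.card < p := by exact_mod_cast hlt
      have h2' : p < T.card + 1 := by exact_mod_cast hgt
      omega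
    obtain ⟨j, hji, hj0', hj1'⟩ := hex
    have hj0 : 0 < q j := lt_of_le_of_ne (h0 j) (Ne.symm hj0')
    have hj1 : q j < 1 := lt_of_le_of_ne (h1 j) hj1'
    set ε1 := min (1 - q i) (q j) with hε1
    set ε2 := min (q i) (1 - q j) with hε2
    have hε1pos : 0 < ε1 := lt_min (by linarith) hj0
    have hε2pos : 0 < ε2 := lt_min hi0 (by linarith)
    have hε1a : ε1 ≤ 1 - q i := min_le_left _ _
    have hε1b : ε1 ≤ q j := min_le_right _ _
    have hε2a : ε2 ≤ q i := min_le_left _ _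
    have hε2b : ε2 ≤ 1 - q j := min_le_right _ _
    set qp : Fin n → ℝ := fun l => if l = i then q i + ε1 else if l = j then q j - ε1 else q l with hqp
    set qm : Fin n → ℝ := fun l => if l = i then q i - ε2 else if l = j then q j + ε2 else q l with hqm
    have hij : i ≠ j := fun h => hji h.symm
    have hqpi : qp i = q i + ε1 := by simp [hqp]
    have hqpj : qp j = q j - ε1 := by simp [hqp, hji]
    have hqmi : qm i = q i - ε2 := by simp [hqm]
    have hqmj : qm j = q j + ε2 := by simp [hqm, hji]
    have hqpo : ∀ l, l ≠ i → l ≠ j → qp l = q l := by intro l h1 h2; simp [hqp, h1, h2]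
    have hqmo : ∀ l, l ≠ i → l ≠ j → qm l = q l := by intro l h1 h2; simp [hqm, h1, h2]
    -- bounds
    have hqp0 : ∀ l, 0 ≤ qp l := by
      intro l
      by_cases hl : l = i
      · rw [hl, hqpi]; linarith
      by_cases hl' : l = j
      · rw [hl', hqpj]; linarith
      · rw [hqpo l hl hl']; exact h0 l
    have hqp1 : ∀ l, qp l ≤ 1 := by
      intro l
      by_cases hl : l = i
      · rw [hl, hqpi]; linarith
      by_cases hl' : l = j
      · rw [hl', hqpj]; linarith [h1 j]
      · rw [hqpo l hl hl']; exact h1 l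
    have hqm0 : ∀ l, 0 ≤ qm l := by
      intro l
      by_cases hl : l = i
      · rw [hl, hqmi]; linarith
      by_cases hl' : l = j
      · rw [hl', hqmj]; linarith
      · rw [hqmo l hl hl']; exact h0 l
    have hqm1 : ∀ l, qm l ≤ 1 := by
      intro l
      by_cases hl : l = i
      · rw [hl, hqmi]; linarith [h1 i]
      by_cases hl' : l = j
      · rw [hl', hqmj]; linarith
      · rw [hqmo l hl hl']; exact h1 l
    -- sums
    have hjmem : j ∈ univ.erase i := Finset.mem_erase.mpr ⟨hji, Finset.mem_univ j⟩
    have hsplit : ∀ f : Fin n → ℝ,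
        ∑ l, f l = f i + (f j + ∑ l ∈ (univ.erase i).erase j, f l) := by
      intro f
      rw [← Finset.add_sum_erase _ f (Finset.mem_univ i), ← Finset.add_sum_erase _ f hjmem]
    have hrest : ∀ f g : Fin n → ℝ, (∀ l, l ≠ i → l ≠ j → f l = g l) →
        ∑ l ∈ (univ.erase i).erase j, f l = ∑ l ∈ (univ.erase i).erase j, g l := by
      intro f g hfg
      apply Finset.sum_congr rfl
      intro l hl
      rw [Finset.mem_erase, Finset.mem_erase] at hl
      exact hfg l hl.2.1 hl.1
    have hsump : ∑ l, qp l = (p : ℝ) := by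
      rw [hsplit qp, hqpi, hqpj, hrest qp q hqpo]
      rw [hsplit q] at hsum; linarith
    have hsumm : ∑ l, qm l = (p : ℝ) := by
      rw [hsplit qm, hqmi, hqmj, hrest qm q hqmo]
      rw [hsplit q] at hsum; linarith
    -- fractional count decreases
    have hfilq : (univ.filter (fun l => q l ≠ 0 ∧ q l ≠ 1)).card = k + 1 := le_antisymm hc hk
    have hcount : ∀ r : Fin n → ℝ, (∀ l, l ≠ i → l ≠ j → r l = q l) →
        (∀ w, (w = i ∨ w = j) ∧ (r w = 0 ∨ r w = 1) → True) → -- dummy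
        ∀ w, (w = i ∨ w = j) → (r w = 0 ∨ r w = 1) →
        (univ.filter (fun l => r l ≠ 0 ∧ r l ≠ 1)).card ≤ k := by
      intro r hro _ w hw hrw
      have hwmem : w ∈ univ.filter (fun l => q l ≠ 0 ∧ q l ≠ 1) := by
        rcases hw with rfl | rfl
        · simp [Finset.mem_filter, hi.2.1, hi.2.2]
        · simp [Finset.mem_filter, hj0', hj1']
      have hsub : (univ.filter (fun l => r l ≠ 0 ∧ r l ≠ 1)) ⊆
          (univ.filter (fun l => q l ≠ 0 ∧ q l ≠ 1)).erase w := by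
        intro l hl
        rw [Finset.mem_filter] at hl
        rw [Finset.mem_erase, Finset.mem_filter]
        constructor
        · rintro rfl
          rcases hrw with h' | h'
          · exact hl.2.1 h'
          · exact hl.2.2 h'
        · refine ⟨Finset.mem_univ l, ?_, ?_⟩
          · by_cases hli : l = i
            · rw [hli]; exact hi.2.1
            by_cases hlj : l = j
            · rw [hlj]; exact hj0'
            · rw [← hro l hli hlj]; exact hl.2.1
          · by_cases hli : l = i
            · rw [hli]; exact hi.2.2
            by_cases hlj : l = j
            · rw [hlj]; exact hj1'
            · rw [← hro l hli hlj]; exact hl.2.2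
      have h1' := Finset.card_le_card hsub
      rw [Finset.card_erase_of_mem hwmem, hfilq] at h1'
      omega
    have hcp : (univ.filter (fun l => qp l ≠ 0 ∧ qp l ≠ 1)).card ≤ k := by
      rcases min_cases (1 - q i) (q j) with ⟨hmin, _⟩ | ⟨hmin, _⟩
      · exact hcount qp hqpo (fun _ _ => trivial) i (Or.inl rfl)
          (Or.inr (by rw [hqpi, hε1, hmin]; ring))
      · exact hcount qp hqpo (fun _ _ => trivial) j (Or.inr rfl)
          (Or.inl (by rw [hqpj, hε1, hmin]; ring))
    have hcm : (univ.filter (fun l => qm l ≠ 0 ∧ qm l ≠ 1)).card ≤ k := by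
      rcases min_cases (q i) (1 - q j) with ⟨hmin, _⟩ | ⟨hmin, _⟩
      · exact hcount qm hqmo (fun _ _ => trivial) i (Or.inl rfl)
          (Or.inl (by rw [hqmi, hε2, hmin]; ring))
      · exact hcount qm hqmo (fun _ _ => trivial) j (Or.inr rfl)
          (Or.inr (by rw [hqmj, hε2, hmin]; ring))
    obtain ⟨μp, hp0, hp1, hpc, hpm⟩ := ih n p qp hcp hqp0 hqp1 hsump
    obtain ⟨μm, hm0, hm1, hmc, hmm⟩ := ih n p qm hcm hqm0 hqm1 hsumm
    set L := ε2 / (ε1 + ε2) with hL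
    have hεne : ε1 + ε2 ≠ 0 := by positivity
    have hL0 : 0 ≤ L := by positivity
    have hL1 : L ≤ 1 := by
      rw [hL, div_le_one (by linarith)]; linarith
    have hLkey : L * ε1 = (1 - L) * ε2 := by
      rw [hL]; field_simp; ring
    have hmix : ∀ l, q l = L * qp l + (1 - L) * qm l := by
      intro l
      by_cases hli : l = i
      · rw [hli, hqpi, hqmi]
        have : L * (q i + ε1) + (1 - L) * (q i - ε2)
            = q i + (L * ε1 - (1 - L) * ε2) := by ring
        rw [this]; linarith [hLkey]
      by_cases hlj : l = j
      · rw [hlj, hqpj, hqmj]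
        have : L * (q j - ε1) + (1 - L) * (q j + ε2)
            = q j - (L * ε1 - (1 - L) * ε2) := by ring
        rw [this]; linarith [hLkey]
      · rw [hqpo l hli hlj, hqmo l hli hlj]; ring
    refine ⟨fun S => L * μp S + (1 - L) * μm S, ?_, ?_, ?_, ?_⟩
    · intro S
      exact add_nonneg (mul_nonneg hL0 (hp0 S)) (mul_nonneg (by linarith) (hm0 S))
    · rw [Finset.sum_add_distrib, ← Finset.mul_sum, ← Finset.mul_sum, hp1, hm1]; ring
    · intro S hS
      by_cases hps : μp S = 0
      · apply hmc
        intro hms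
        apply hS
        simp [hps, hms]
      · exact hpc S hps
    · intro l
      have hsw : ∀ S : Finset (Fin n),
          (if l ∈ S then L * μp S + (1 - L) * μm S else 0)
          = L * (if l ∈ S then μp S else 0) + (1 - L) * (if l ∈ S then μm S else 0) := by
        intro S; split_ifs <;> simp
      rw [Finset.sum_congr rfl (fun S _ => hsw S), Finset.sum_add_distrib,
        ← Finset.mul_sum, ← Finset.mul_sum, hpm l, hmm l]
      exact (hmix l).symm

/-- proportional sampling: there is a distribution over p-element subsets
of {1,...,n} under which index j is included with probability exactly q_j. -/
theorem stmt13 (n p : ℕ) (q : Fin n → ℝ) (h0 : ∀ j, 0 ≤ q j) (h1 : ∀ j, q j ≤ 1)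
    (hsum : ∑ j, q j = p) :
    ∃ μ : Finset (Fin n) → ℝ,
      (∀ S, 0 ≤ μ S) ∧
      (∑ S : Finset (Fin n), μ S = 1) ∧
      (∀ S, μ S ≠ 0 → S.card = p) ∧
      ∀ j, (∑ S : Finset (Fin n), if j ∈ S then μ S else 0) = q j := by
  exact key (univ.filter (fun j => q j ≠ 0 ∧ q j ≠ 1)).card n p q le_rfl h0 h1 hsum
end
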